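/- arXiv:1911.10877 — 2 statements merged into one kernel-verified Lean document; each statement's English description precedes it below -/
import Mathlib

section
/- Let Q be a real symmetric n×n matrix whose associated quadratic form has signature (p, q, s) (p positive, q negative, s zero eigenvalues, counted with multiplicity). Then there exists a (possibly nonsymmetric) real matrix Q' with rank(Q') = max(p, q) such that xᵀQ'x = xᵀQx for all x ∈ ℝⁿ. -/
open Matrix

namespace MinRankAux

variable (n p q : ℕ)

noncomputable def Nmat : Matrix (Fin n) (Fin n) ℝ :=
  Matrix.of fun i j => if (j : ℕ) < min p q ∧ (i : ℕ) = p + j then (1 : ℝ) else 0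

noncomputable def Dmat : Matrix (Fin n) (Fin n) ℝ :=
  Matrix.diagonal (fun i => if p + min p q ≤ (i : ℕ) ∧ (i : ℕ) < p + q then (-1 : ℝ) else 1)

noncomputable def Jmat : Matrix (Fin n) (Fin n) ℝ :=
  Matrix.diagonal (fun i => if (i : ℕ) < p ∨ (p + min p q ≤ (i : ℕ) ∧ (i : ℕ) < p + q)
    then (1 : ℝ) else 0)

lemma nmat_apply (i j : Fin n) :
    Nmat n p q i j = if (j : ℕ) < min p q ∧ (i : ℕ) = p + j then (1 : ℝ) else 0 := rfl

lemma nmat_mul_nmat : Nmat n p q * Nmat n p q = 0 := by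
  ext i j
  rw [Matrix.mul_apply, Matrix.zero_apply]
  refine Finset.sum_eq_zero fun k _ => ?_
  rw [nmat_apply, nmat_apply]
  rcases Nat.lt_or_ge (k : ℕ) (min p q) with h | h
  · rw [if_neg (fun hc : (j : ℕ) < min p q ∧ (k : ℕ) = p + j => by omega), mul_zero]
  · rw [if_neg (fun hc : (k : ℕ) < min p q ∧ (i : ℕ) = p + k => by omega), zero_mul]

lemma dmat_mul_nmat : Dmat n p q * Nmat n p q = Nmat n p q := by
  ext i j
  rw [Dmat, Matrix.diagonal_mul, nmat_apply]
  by_cases h : (j : ℕ) < min p q ∧ (i : ℕ) = p + j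
  · rw [if_pos h, if_neg (fun hc : p + min p q ≤ (i : ℕ) ∧ (i : ℕ) < p + q => by omega), one_mul]
  · rw [if_neg h, mul_zero]

lemma nmat_mul_dmat : Nmat n p q * Dmat n p q = Nmat n p q := by
  ext i j
  rw [Dmat, Matrix.mul_diagonal, nmat_apply]
  by_cases h : (j : ℕ) < min p q ∧ (i : ℕ) = p + j
  · rw [if_pos h, if_neg (fun hc : p + min p q ≤ (j : ℕ) ∧ (j : ℕ) < p + q => by omega), mul_one]
  · rw [if_neg h, zero_mul]

lemma dmat_mul_dmat : Dmat n p q * Dmat n p q = 1 := by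
  rw [Dmat, Matrix.diagonal_mul_diagonal]
  have : (fun i : Fin n => (if p + min p q ≤ (i : ℕ) ∧ (i : ℕ) < p + q then (-1 : ℝ) else 1) *
      (if p + min p q ≤ (i : ℕ) ∧ (i : ℕ) < p + q then (-1 : ℝ) else 1)) = fun _ => (1 : ℝ) := by
    funext i
    split_ifs <;> norm_num
  rw [this, Matrix.diagonal_one]

lemma jmat_mul_nmat_t : Jmat n p q * (Nmat n p q)ᵀ = (Nmat n p q)ᵀ := by
  ext i j
  rw [Jmat, Matrix.diagonal_mul, Matrix.transpose_apply, nmat_apply]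
  by_cases h : (i : ℕ) < min p q ∧ (j : ℕ) = p + i
  · rw [if_pos h, if_pos (Or.inl (by omega)), one_mul]
  · rw [if_neg h, mul_zero]

lemma dmat_mul_nmat_t : Dmat n p q * (Nmat n p q)ᵀ = (Nmat n p q)ᵀ := by
  ext i j
  rw [Dmat, Matrix.diagonal_mul, Matrix.transpose_apply, nmat_apply]
  by_cases h : (i : ℕ) < min p q ∧ (j : ℕ) = p + i
  · rw [if_pos h, if_neg (fun hc : p + min p q ≤ (i : ℕ) ∧ (i : ℕ) < p + q => by omega), one_mul]
  · rw [if_neg h, mul_zero]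

lemma nmat_mul_jmat : Nmat n p q * Jmat n p q = Nmat n p q := by
  ext i j
  rw [Jmat, Matrix.mul_diagonal, nmat_apply]
  by_cases h : (j : ℕ) < min p q ∧ (i : ℕ) = p + j
  · rw [if_pos h, if_pos (Or.inl (by omega)), mul_one]
  · rw [if_neg h, zero_mul]

lemma nmat_mul_nmat_t : Nmat n p q * (Nmat n p q)ᵀ =
    Matrix.diagonal (fun i : Fin n =>
      if p ≤ (i : ℕ) ∧ (i : ℕ) < p + min p q then (1 : ℝ) else 0) := by
  ext i j
  rw [Matrix.mul_apply, Matrix.diagonal_apply]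
  by_cases hi : p ≤ (i : ℕ) ∧ (i : ℕ) < p + min p q
  · have hk : (i : ℕ) - p < n := by have := i.isLt; omega
    rw [Finset.sum_eq_single (⟨(i : ℕ) - p, hk⟩ : Fin n)]
    · rw [Matrix.transpose_apply, nmat_apply, nmat_apply]
      have h1 : ((⟨(i : ℕ) - p, hk⟩ : Fin n) : ℕ) < min p q ∧
          (i : ℕ) = p + ((⟨(i : ℕ) - p, hk⟩ : Fin n) : ℕ) := by
        constructor <;> simp <;> omega
      rw [if_pos h1]
      by_cases hij : i = j
      · subst hij
        rw [if_pos rfl, if_pos hi, if_pos h1, one_mul]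
      · rw [if_neg (fun hc : ((⟨(i : ℕ) - p, hk⟩ : Fin n) : ℕ) < min p q ∧
            (j : ℕ) = p + ((⟨(i : ℕ) - p, hk⟩ : Fin n) : ℕ) =>
            hij (Fin.ext (by omega))), if_neg hij, mul_zero]
    · intro k _ hkne
      rw [Matrix.transpose_apply, nmat_apply, nmat_apply]
      rcases Nat.lt_or_ge (k : ℕ) (min p q) with h | h
      · rw [if_neg (fun hc : (k : ℕ) < min p q ∧ (i : ℕ) = p + k =>
          hkne (Fin.ext (by simp; omega))), zero_mul]
      · rw [if_neg (fun hc : (k : ℕ) < min p q ∧ (i : ℕ) = p + k => by omega), zero_mul]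
    · exact fun h => absurd (Finset.mem_univ _) h
  · rw [Finset.sum_eq_zero]
    · split_ifs <;> rfl
    · intro k _
      rw [Matrix.transpose_apply, nmat_apply, nmat_apply]
      rcases Nat.lt_or_ge (k : ℕ) (min p q) with h | h
      · rw [if_neg (fun hc : (k : ℕ) < min p q ∧ (i : ℕ) = p + k => by omega), zero_mul]
      · rw [if_neg (fun hc : (k : ℕ) < min p q ∧ (i : ℕ) = p + k => by omega), zero_mul]

end MinRankAux

open MinRankAux
theorem exists_min_rank_representation {n p q s : ℕ} (hn : p + q + s = n)
    (Q P : Matrix (Fin n) (Fin n) ℝ) (hQ : Qᵀ = Q) (hP : IsUnit P)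
    (hsig : Pᵀ * Q * P = Matrix.diagonal (fun i : Fin n =>
      if (i : ℕ) < p then (1 : ℝ) else if (i : ℕ) < p + q then -1 else 0)) :
    ∃ Q' : Matrix (Fin n) (Fin n) ℝ, Q'.rank = max p q ∧
      ∀ x : Fin n → ℝ, x ⬝ᵥ Q'.mulVec x = x ⬝ᵥ Q.mulVec x := by
  have hEinv : (Dmat n p q - Nmat n p q) * (Dmat n p q + Nmat n p q) = 1 := by
    rw [sub_mul, mul_add, mul_add, dmat_mul_dmat, dmat_mul_nmat, nmat_mul_dmat, nmat_mul_nmat]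
    abel
  have hGinv : ((1 : Matrix (Fin n) (Fin n) ℝ) + (Nmat n p q)ᵀ) * (1 - (Nmat n p q)ᵀ) = 1 := by
    rw [add_mul, one_mul, mul_sub, mul_one, ← Matrix.transpose_mul,
      nmat_mul_nmat, Matrix.transpose_zero]
    abel
  have hEdet : IsUnit (Dmat n p q - Nmat n p q).det :=
    Matrix.isUnit_det_of_right_inverse hEinv
  have hGdet : IsUnit ((1 : Matrix (Fin n) (Fin n) ℝ) + (Nmat n p q)ᵀ).det :=
    Matrix.isUnit_det_of_right_inverse hGinv
  have hPdet : IsUnit P.det := P.isUnit_iff_isUnit_det.mp hP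
  have hPtdet : IsUnit (Pᵀ).det := by rwa [Matrix.det_transpose]
  have hPinvdet : IsUnit (P⁻¹).det := by
    rw [Matrix.det_nonsing_inv]
    exact hPdet.ringInverse
  have hPtinvdet : IsUnit ((Pᵀ)⁻¹).det := by
    rw [Matrix.det_nonsing_inv]
    exact hPtdet.ringInverse
  -- the key matrix identity
  have hD' : (Dmat n p q - Nmat n p q) * Jmat n p q *
      ((1 : Matrix (Fin n) (Fin n) ℝ) + (Nmat n p q)ᵀ) =
      Matrix.diagonal (fun i : Fin n =>
        if (i : ℕ) < p then (1 : ℝ) else if (i : ℕ) < p + q then -1 else 0) +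
      ((Nmat n p q)ᵀ - Nmat n p q) := by
    rw [Matrix.mul_assoc, mul_add, mul_one, jmat_mul_nmat_t, sub_mul, mul_add, mul_add,
      dmat_mul_nmat_t, nmat_mul_jmat, nmat_mul_nmat_t]
    have hdiag : Dmat n p q * Jmat n p q -
        Matrix.diagonal (fun i : Fin n =>
          if p ≤ (i : ℕ) ∧ (i : ℕ) < p + min p q then (1 : ℝ) else 0) =
        Matrix.diagonal (fun i : Fin n =>
          if (i : ℕ) < p then (1 : ℝ) else if (i : ℕ) < p + q then -1 else 0) := by
      rw [Dmat, Jmat, Matrix.diagonal_mul_diagonal, Matrix.diagonal_sub]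
      refine congrArg Matrix.diagonal (funext fun i => ?_)
      have hmq : min p q ≤ q := min_le_right p q
      have hmp : min p q ≤ p := min_le_left p q
      split_ifs <;> first | omega | norm_num
    rw [← hdiag]
    abel
  refine ⟨(Pᵀ)⁻¹ * ((Dmat n p q - Nmat n p q) * Jmat n p q *
      ((1 : Matrix (Fin n) (Fin n) ℝ) + (Nmat n p q)ᵀ)) * P⁻¹, ?_, ?_⟩
  · -- rank computation
    rw [Matrix.rank_mul_eq_left_of_isUnit_det _ _ hPinvdet,
      Matrix.rank_mul_eq_right_of_isUnit_det _ _ hPtinvdet,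
      Matrix.rank_mul_eq_left_of_isUnit_det _ _ hGdet,
      Matrix.rank_mul_eq_right_of_isUnit_det _ _ hEdet,
      Jmat, Matrix.rank_diagonal]
    have hiff : ∀ i : Fin n,
        ((if (i : ℕ) < p ∨ (p + min p q ≤ (i : ℕ) ∧ (i : ℕ) < p + q) then (1 : ℝ) else 0) ≠ 0)
        ↔ ((i : ℕ) < p ∨ (p + min p q ≤ (i : ℕ) ∧ (i : ℕ) < p + q)) := by
      intro i
      split_ifs with h <;> simp [h]
    rw [Fintype.card_subtype]
    have hcard : (Finset.univ.filter fun i : Fin n =>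
        (i : ℕ) < p ∨ (p + min p q ≤ (i : ℕ) ∧ (i : ℕ) < p + q)).card =
        ((Finset.range n).filter fun x =>
          x < p ∨ (p + min p q ≤ x ∧ x < p + q)).card := by
      apply Finset.card_bij (fun (i : Fin n) _ => (i : ℕ))
      · intro a ha
        simp only [Finset.mem_filter, Finset.mem_univ, true_and] at ha
        simp only [Finset.mem_filter, Finset.mem_range]
        exact ⟨a.isLt, ha⟩
      · intro a _ b _ hab
        exact Fin.ext hab
      · intro b hb
        simp only [Finset.mem_filter, Finset.mem_range] at hb
        exact ⟨⟨b, hb.1⟩, by simpa using hb.2, rfl⟩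
    have hset : ((Finset.range n).filter fun x =>
        x < p ∨ (p + min p q ≤ x ∧ x < p + q)) =
        Finset.range p ∪ Finset.Ico (p + min p q) (p + q) := by
      ext x
      simp only [Finset.mem_filter, Finset.mem_range, Finset.mem_union, Finset.mem_Ico]
      omega
    have hdisj : Disjoint (Finset.range p) (Finset.Ico (p + min p q) (p + q)) := by
      rw [Finset.disjoint_left]
      intro x hx hx'
      simp only [Finset.mem_range] at hx
      simp only [Finset.mem_Ico] at hx'
      omega
    simp only [hiff]
    rw [hcard, hset, Finset.card_union_of_disjoint hdisj, Finset.card_range, Nat.card_Ico]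
    omega
  · -- quadratic form
    intro x
    have hQeq : Q = (Pᵀ)⁻¹ * Matrix.diagonal (fun i : Fin n =>
        if (i : ℕ) < p then (1 : ℝ) else if (i : ℕ) < p + q then -1 else 0) * P⁻¹ := by
      rw [← hsig, Matrix.mul_assoc Pᵀ Q P, Matrix.nonsing_inv_mul_cancel_left _ _ hPtdet,
        Matrix.mul_nonsing_inv_cancel_right _ _ hPdet]
    have hsplit : (Pᵀ)⁻¹ * ((Dmat n p q - Nmat n p q) * Jmat n p q *
        ((1 : Matrix (Fin n) (Fin n) ℝ) + (Nmat n p q)ᵀ)) * P⁻¹ =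
        Q + (Pᵀ)⁻¹ * ((Nmat n p q)ᵀ - Nmat n p q) * P⁻¹ := by
      rw [hD', hQeq, mul_add, add_mul]
    rw [hsplit]
    set K := (Pᵀ)⁻¹ * ((Nmat n p q)ᵀ - Nmat n p q) * P⁻¹ with hK
    have hKt : Kᵀ = -K := by
      rw [hK, Matrix.transpose_mul, Matrix.transpose_mul, Matrix.transpose_sub,
        Matrix.transpose_transpose, Matrix.transpose_nonsing_inv,
        Matrix.transpose_nonsing_inv, Matrix.transpose_transpose]
      simp only [Matrix.mul_assoc, sub_mul, mul_sub, neg_sub]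
    have hKzero : x ⬝ᵥ K.mulVec x = 0 := by
      have h1 : x ⬝ᵥ K.mulVec x = (Kᵀ.mulVec x) ⬝ᵥ x := by
        rw [Matrix.dotProduct_mulVec, Matrix.mulVec_transpose]
      rw [hKt, Matrix.neg_mulVec, neg_dotProduct, dotProduct_comm (K.mulVec x) x] at h1
      linarith
    rw [Matrix.add_mulVec, dotProduct_add, hKzero, add_zero]
end

section
/- Let Q be a real symmetric n×n matrix whose associated quadratic form has signature (p, q, s). Then every real matrix Q' satisfying xᵀQ'x = xᵀQx for all x ∈ ℝⁿ has rank(Q') ≥ max(p, q). -/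
open Matrix

private def extMap (p n off : ℕ) : (Fin p → ℝ) →ₗ[ℝ] (Fin n → ℝ) where
  toFun x i := if h2 : off ≤ (i : ℕ) ∧ (i : ℕ) < off + p then x ⟨(i : ℕ) - off, by omega⟩ else 0
  map_add' x y := by ext i; dsimp; split_ifs <;> simp
  map_smul' c x := by ext i; dsimp; split_ifs <;> simp

private lemma rank_ge_aux {n m : ℕ} (Q' : Matrix (Fin n) (Fin n) ℝ)
    (f : (Fin m → ℝ) →ₗ[ℝ] (Fin n → ℝ))
    (h : Function.Injective ⇑(Q'.mulVecLin ∘ₗ f)) : m ≤ Q'.rank := by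
  have h1 : LinearMap.range (Q'.mulVecLin ∘ₗ f) ≤ LinearMap.range Q'.mulVecLin :=
    LinearMap.range_comp_le_range _ _
  have h2 := Submodule.finrank_mono h1
  rw [show Q'.rank = Module.finrank ℝ (LinearMap.range Q'.mulVecLin) from rfl]
  calc m = Module.finrank ℝ (Fin m → ℝ) := by simp
    _ = Module.finrank ℝ (LinearMap.range (Q'.mulVecLin ∘ₗ f)) :=
        (LinearMap.finrank_range_of_inj h).symm
    _ ≤ _ := h2

theorem min_rank_representation_lower_bound {n p q s : ℕ} (hn : p + q + s = n)
    (Q P : Matrix (Fin n) (Fin n) ℝ) (hQ : Qᵀ = Q) (hP : IsUnit P)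
    (hsig : Pᵀ * Q * P = Matrix.diagonal (fun i : Fin n =>
      if (i : ℕ) < p then (1 : ℝ) else if (i : ℕ) < p + q then -1 else 0))
    (Q' : Matrix (Fin n) (Fin n) ℝ)
    (hQQ' : ∀ x : Fin n → ℝ, x ⬝ᵥ Q'.mulVec x = x ⬝ᵥ Q.mulVec x) :
    max p q ≤ Q'.rank := by
  set d : Fin n → ℝ := fun i : Fin n =>
      if (i : ℕ) < p then (1 : ℝ) else if (i : ℕ) < p + q then -1 else 0 with hd
  have key : ∀ z : Fin n → ℝ, Q'.mulVec (P *ᵥ z) = 0 → ∑ i, z i * (d i * z i) = 0 := by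
    intro z hz
    have h1 : (P *ᵥ z) ⬝ᵥ Q'.mulVec (P *ᵥ z) = 0 := by rw [hz]; simp
    rw [hQQ'] at h1
    have h2 : (P *ᵥ z) ⬝ᵥ Q.mulVec (P *ᵥ z) = z ⬝ᵥ ((Pᵀ * Q * P) *ᵥ z) := by
      rw [Matrix.mulVec_mulVec]
      rw [show P *ᵥ z = z ᵥ* Pᵀ by rw [Matrix.vecMul_transpose]]
      rw [← Matrix.dotProduct_mulVec, Matrix.mulVec_mulVec, ← Matrix.mul_assoc]
    rw [h2, hsig] at h1
    rw [← h1]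
    simp [dotProduct, Matrix.mulVec_diagonal]
  -- p part
  have hp : p ≤ Q'.rank := by
    apply rank_ge_aux Q' (P.mulVecLin ∘ₗ extMap p n 0)
    rw [← LinearMap.ker_eq_bot, LinearMap.ker_eq_bot']
    intro x hx
    simp only [LinearMap.comp_apply, Matrix.mulVecLin_apply] at hx
    have hz := key _ hx
    have hsum : ∀ i : Fin n, (extMap p n 0 x) i * (d i * (extMap p n 0 x) i)
        = if h : 0 ≤ (i : ℕ) ∧ (i : ℕ) < 0 + p then x ⟨(i : ℕ) - 0, by omega⟩ ^ 2 else 0 := by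
      intro i
      simp only [extMap, hd, LinearMap.coe_mk, AddHom.coe_mk]
      split_ifs <;> first | (exfalso; omega) | ring | simp
    rw [Finset.sum_congr rfl (fun i _ => hsum i)] at hz
    have hall := (Finset.sum_eq_zero_iff_of_nonneg (fun i _ => by
      split_ifs with h
      · positivity
      · exact le_refl 0)).mp hz
    funext j
    have hjn : (j : ℕ) < n := by have := j.isLt; omega
    have h0 := hall ⟨(j : ℕ), hjn⟩ (Finset.mem_univ _)
    rw [dif_pos (show 0 ≤ ((⟨(j : ℕ), hjn⟩ : Fin n) : ℕ) ∧ ((⟨(j : ℕ), hjn⟩ : Fin n) : ℕ) < 0 + p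
      from ⟨Nat.zero_le _, show (j : ℕ) < 0 + p by omega⟩)] at h0
    have hx0 := pow_eq_zero_iff (by norm_num : (2 : ℕ) ≠ 0) |>.mp h0
    have hj : (⟨((⟨(j : ℕ), hjn⟩ : Fin n) : ℕ) - 0,
        show (j : ℕ) - 0 < p by have := j.isLt; omega⟩ : Fin p) = j := by
      apply Fin.ext; show (j : ℕ) - 0 = (j : ℕ); omega
    rw [hj] at hx0
    simpa using hx0
  -- q part
  have hq : q ≤ Q'.rank := by
    apply rank_ge_aux Q' (P.mulVecLin ∘ₗ extMap q n p)
    rw [← LinearMap.ker_eq_bot, LinearMap.ker_eq_bot']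
    intro x hx
    simp only [LinearMap.comp_apply, Matrix.mulVecLin_apply] at hx
    have hz := key _ hx
    have hsum : ∀ i : Fin n, (extMap q n p x) i * (d i * (extMap q n p x) i)
        = if h : p ≤ (i : ℕ) ∧ (i : ℕ) < p + q then -(x ⟨(i : ℕ) - p, by omega⟩ ^ 2) else 0 := by
      intro i
      simp only [extMap, hd, LinearMap.coe_mk, AddHom.coe_mk]
      split_ifs <;> first | (exfalso; omega) | ring | simp
    rw [Finset.sum_congr rfl (fun i _ => hsum i)] at hz
    have hall := (Finset.sum_eq_zero_iff_of_nonpos (fun i _ => by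
      split_ifs with h
      · simp [sq_nonneg]
      · exact le_refl 0)).mp hz
    funext j
    have hjn : p + (j : ℕ) < n := by have := j.isLt; omega
    have h0 := hall ⟨p + (j : ℕ), hjn⟩ (Finset.mem_univ _)
    rw [dif_pos (show p ≤ ((⟨p + (j : ℕ), hjn⟩ : Fin n) : ℕ) ∧
        ((⟨p + (j : ℕ), hjn⟩ : Fin n) : ℕ) < p + q from
        ⟨show p ≤ p + (j : ℕ) by omega, show p + (j : ℕ) < p + q by have := j.isLt; omega⟩)] at h0
    have h1 : x ⟨((⟨p + (j : ℕ), hjn⟩ : Fin n) : ℕ) - p,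
        show p + (j : ℕ) - p < q by have := j.isLt; omega⟩ ^ 2 = 0 := by
      have := neg_eq_zero.mp h0
      linarith
    have hx0 := pow_eq_zero_iff (by norm_num : (2 : ℕ) ≠ 0) |>.mp h1
    have hj : (⟨((⟨p + (j : ℕ), hjn⟩ : Fin n) : ℕ) - p,
        show p + (j : ℕ) - p < q by have := j.isLt; omega⟩ : Fin q) = j := by
      apply Fin.ext; show p + (j : ℕ) - p = (j : ℕ); omega
    rw [hj] at hx0
    simpa using hx0
  exact max_le hp hq
end
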